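/- Let (Ω, F, μ) be a probability space, let n be a positive integer, and let x_1,…,x_n : Ω → {0,1} be random variables with expectations E[x_i] = y_i. Suppose that for every subset S ⊆ {1,…,n}, E[ Π_{i∈S} (1 − x_i) ] ≤ Π_{i∈S} (1 − y_i). Then for every vector of weights w ∈ [0,1]^n and every subset S ⊆ {1,…,n}, E[ Π_{i∈S} (1 + w_i − x_i) ] ≤ Π_{i∈S} (1 + w_i − y_i). -/
import Mathlib


open MeasureTheory

/-- Second inequality of the weighted negative-correlation lemma (Appendix E of the
paper): the shifted variables `1 + w i - x i` also satisfy the product-expectation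
inequality. -/
theorem weighted_negative_correlation_shifted
    (Ω : Type*) [MeasurableSpace Ω] (μ : Measure Ω) [IsProbabilityMeasure μ]
    (n : ℕ) (hn : 0 < n)
    (x : Fin n → Ω → ℝ) (hmeas : ∀ i, Measurable (x i))
    (hbin : ∀ i ω, x i ω = 0 ∨ x i ω = 1)
    (y : Fin n → ℝ) (hy : ∀ i, (∫ ω, x i ω ∂μ) = y i)
    (hneg : ∀ S : Finset (Fin n),
      (∫ ω, ∏ i ∈ S, (1 - x i ω) ∂μ) ≤ ∏ i ∈ S, (1 - y i))
    (w : Fin n → ℝ) (hw : ∀ i, w i ∈ Set.Icc (0 : ℝ) 1)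
    (S : Finset (Fin n)) :
    (∫ ω, ∏ i ∈ S, (1 + w i - x i ω) ∂μ) ≤ ∏ i ∈ S, (1 + w i - y i) := by
  -- expansion of the products
  have hexp : ∀ ω, ∏ i ∈ S, (1 + w i - x i ω)
      = ∑ t ∈ S.powerset, (∏ i ∈ t, (1 - x i ω)) * ∏ i ∈ S \ t, w i := by
    intro ω
    have : ∀ i, 1 + w i - x i ω = (1 - x i ω) + w i := by intro i; ring
    simp_rw [this]
    exact Finset.prod_add _ _ _
  have hexpy : ∏ i ∈ S, (1 + w i - y i)
      = ∑ t ∈ S.powerset, (∏ i ∈ t, (1 - y i)) * ∏ i ∈ S \ t, w i := by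
    have : ∀ i, 1 + w i - y i = (1 - y i) + w i := by intro i; ring
    simp_rw [this]
    exact Finset.prod_add _ _ _
  -- bounds for the binary products
  have hprod01 : ∀ (t : Finset (Fin n)) (ω : Ω),
      (∏ i ∈ t, (1 - x i ω)) = 0 ∨ (∏ i ∈ t, (1 - x i ω)) = 1 := by
    intro t ω
    by_cases h : ∀ i ∈ t, x i ω = 0
    · right; apply Finset.prod_eq_one; intro i hi; rw [h i hi]; ring
    · left
      push_neg at h
      obtain ⟨i, hi, hxi⟩ := h
      have : x i ω = 1 := (hbin i ω).resolve_left hxi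
      exact Finset.prod_eq_zero hi (by rw [this]; ring)
  -- integrability of each term
  have hint : ∀ t : Finset (Fin n),
      Integrable (fun ω => (∏ i ∈ t, (1 - x i ω)) * ∏ i ∈ S \ t, w i) μ := by
    intro t
    have hm : Measurable fun ω => (∏ i ∈ t, (1 - x i ω)) * ∏ i ∈ S \ t, w i := by
      exact (Finset.measurable_prod t (fun i _ => (measurable_const.sub (hmeas i)))).mul
        measurable_const
    refine (integrable_const (1 * ∏ i ∈ S \ t, w i)).mono' hm.aestronglyMeasurable ?_
    filter_upwards with ω
    have hwnn : (0:ℝ) ≤ ∏ i ∈ S \ t, w i :=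
      Finset.prod_nonneg fun i _ => (hw i).1
    rw [Real.norm_eq_abs, abs_mul, abs_of_nonneg hwnn]
    rcases hprod01 t ω with h | h <;> simp [h, hwnn]
  -- main computation
  simp_rw [hexp, hexpy]
  rw [integral_finset_sum _ (fun t _ => hint t)]
  apply Finset.sum_le_sum
  intro t ht
  rw [integral_mul_const]
  have hwnn : (0:ℝ) ≤ ∏ i ∈ S \ t, w i := Finset.prod_nonneg fun i _ => (hw i).1
  exact mul_le_mul_of_nonneg_right (hneg t) hwnn
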